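/- Let S(z) = sin(2πz) − sin(2π/z) for z ≠ 0. Then |S(z)| > 1 for every z ∈ ℂ with |z| = 4/5 or |z| = 5/4. -/

import Mathlib

open Real Complex

lemma abs_sin_sq (a b : ℝ) :
    (‖Complex.sin (a + b * Complex.I)‖)^2 = Real.sin a ^ 2 + Real.sinh b ^ 2 := by
  rw [Complex.sin_add_mul_I]
  rw [← Complex.ofReal_sin, ← Complex.ofReal_cos, ← Complex.ofReal_sinh, ← Complex.ofReal_cosh]
  rw [← Complex.ofReal_mul, ← Complex.ofReal_mul]
  rw [Complex.sq_norm, Complex.normSq_add_mul_I]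
  have h1 := Real.sin_sq_add_cos_sq a
  have h2 := Real.cosh_sq b
  nlinarith [h1, h2]

lemma abs_cos_sq (a b : ℝ) :
    (‖Complex.cos (a + b * Complex.I)‖)^2 = Real.cos a ^ 2 + Real.sinh b ^ 2 := by
  rw [Complex.cos_add_mul_I]
  have : (Complex.cos a * Complex.cosh b - Complex.sin a * Complex.sinh b * Complex.I)
      = ((Real.cos a * Real.cosh b : ℝ) : ℂ)
        + ((-(Real.sin a * Real.sinh b) : ℝ) : ℂ) * Complex.I := by
    push_cast
    ring
  rw [this, Complex.sq_norm, Complex.normSq_add_mul_I]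
  have h1 := Real.sin_sq_add_cos_sq a
  have h2 := Real.cosh_sq b
  nlinarith [h1, h2]

lemma cos_lb (t d : ℝ) (h1 : -d ≤ t) (h2 : t ≤ d) : 1 - d^2/2 ≤ Real.cos t := by
  have := Real.one_sub_sq_div_two_le_cos (x := t)
  nlinarith

lemma expand_lemma (c sn A B : ℝ) : c^2 * sn^2 ≤ (c^2 + A^2) * (sn^2 + B^2) := by
  nlinarith [mul_nonneg (sq_nonneg c) (sq_nonneg B),
    mul_nonneg (sq_nonneg A) (sq_nonneg sn), mul_nonneg (sq_nonneg A) (sq_nonneg B)]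

lemma expand_lemma' (c sn A B : ℝ) : A^2 * B^2 ≤ (c^2 + A^2) * (sn^2 + B^2) := by
  nlinarith [mul_nonneg (sq_nonneg c) (sq_nonneg sn),
    mul_nonneg (sq_nonneg c) (sq_nonneg B), mul_nonneg (sq_nonneg A) (sq_nonneg sn)]

lemma key_real (x y : ℝ) (hx : 0 ≤ x) (hy : 0 ≤ y) (hxy : x^2 + y^2 = 25/16) :
    1/4 < (Real.cos (41*π*x/25)^2 + Real.sinh (9*π*y/25)^2) *
          (Real.sin (9*π*x/25)^2 + Real.sinh (41*π*y/25)^2) := by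
  have hπ0 := Real.pi_pos
  set c : ℝ := Real.cos (41*π*x/25) with hcdef
  set sn : ℝ := Real.sin (9*π*x/25) with hsndef
  set A : ℝ := Real.sinh (9*π*y/25) with hAdef
  set B : ℝ := Real.sinh (41*π*y/25) with hBdef
  rcases le_or_gt (1/2 : ℝ) y with h | h
  · -- y ≥ 1/2 : both sinh terms are large
    have hp3 : (3:ℝ) < π := Real.pi_gt_three
    have s1 : (9*π/50 : ℝ) ≤ A := by
      refine le_trans (by nlinarith) (Real.self_le_sinh_iff.mpr (by nlinarith))
    have s2 : (41*π/50 : ℝ) ≤ B := by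
      refine le_trans (by nlinarith) (Real.self_le_sinh_iff.mpr (by nlinarith))
    have h1 : (0:ℝ) ≤ 9*π/50 := by positivity
    have h2 : (0:ℝ) ≤ 41*π/50 := by positivity
    have hAB : (1/2 : ℝ) < A * B := by
      have := mul_le_mul s1 s2 h2 (h1.trans s1)
      nlinarith
    have hABsq : (1/4 : ℝ) < A^2 * B^2 := by nlinarith
    have expand : A^2 * B^2 ≤ (c^2 + A^2) * (sn^2 + B^2) := expand_lemma' c sn A B
    linarith
  · -- y < 1/2 : x is close to 5/4, the trig terms are large
    have hπl : (3141592/1000000 : ℝ) < π := by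
      rw [show (3141592/1000000 : ℝ) = 3.141592 by norm_num]
      exact Real.pi_gt_d6
    have hπu : π < 3141593/1000000 := by
      rw [show (3141593/1000000 : ℝ) = 3.141593 by norm_num]
      exact Real.pi_lt_d6
    have hx2 : (21/16 : ℝ) ≤ x^2 := by nlinarith
    have hx54 : x ≤ 5/4 := by nlinarith
    have hxl : (229/200 : ℝ) ≤ x := by nlinarith
    have hpx1 : π * x ≤ π * (5/4) := by
      exact mul_le_mul_of_nonneg_left hx54 hπ0.le
    have hpx2 : π * (229/200) ≤ π * x := by
      exact mul_le_mul_of_nonneg_left hxl hπ0.le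
    -- cosine factor
    have hc : c = Real.cos (41*π*x/25 - 2*π) := by
      rw [hcdef, Real.cos_sub_two_pi]
    have ht1 : 41*π*x/25 - 2*π ≤ 2/5 := by linarith
    have ht2 : -(2/5) ≤ 41*π*x/25 - 2*π := by linarith
    have hcos : (23/25 : ℝ) ≤ c := by
      rw [hc]
      have := cos_lb (41*π*x/25 - 2*π) (2/5) ht2 ht1
      linarith
    -- sine factor
    have hs : sn = Real.cos (π/2 - 9*π*x/25) := by
      rw [hsndef, Real.cos_pi_div_two_sub]
    have hs1 : π/2 - 9*π*x/25 ≤ 28/100 := by linarith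
    have hs2 : -(28/100) ≤ π/2 - 9*π*x/25 := by linarith
    have hsin : (24/25 : ℝ) ≤ sn := by
      rw [hs]
      have := cos_lb (π/2 - 9*π*x/25) (28/100) hs2 hs1
      linarith
    have hc2 : (23/25 : ℝ)^2 ≤ c^2 := pow_le_pow_left₀ (by norm_num) hcos 2
    have hs2' : (24/25 : ℝ)^2 ≤ sn^2 := pow_le_pow_left₀ (by norm_num) hsin 2
    have hprod : (23/25 : ℝ)^2 * (24/25)^2 ≤ c^2 * sn^2 :=
      mul_le_mul hc2 hs2' (by positivity) (sq_nonneg c)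
    have expand : c^2 * sn^2 ≤ (c^2 + A^2) * (sn^2 + B^2) := expand_lemma c sn A B
    have hconst : (1/4 : ℝ) < (23/25 : ℝ)^2 * (24/25)^2 := by norm_num
    linarith

lemma key_real' (x y : ℝ) (hxy : x^2 + y^2 = 25/16) :
    1/4 < (Real.cos (41*π*x/25)^2 + Real.sinh (9*π*y/25)^2) *
          (Real.sin (9*π*x/25)^2 + Real.sinh (41*π*y/25)^2) := by
  have h := key_real |x| |y| (abs_nonneg x) (abs_nonneg y)
    (by rw [_root_.sq_abs, _root_.sq_abs]; exact hxy)
  have e1 : Real.cos (41*π*|x|/25)^2 = Real.cos (41*π*x/25)^2 := by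
    rcases abs_cases x with ⟨h', _⟩ | ⟨h', _⟩ <;> rw [h']
    rw [show 41*π*(-x)/25 = -(41*π*x/25) by ring, Real.cos_neg]
  have e2 : Real.sin (9*π*|x|/25)^2 = Real.sin (9*π*x/25)^2 := by
    rcases abs_cases x with ⟨h', _⟩ | ⟨h', _⟩ <;> rw [h']
    rw [show 9*π*(-x)/25 = -(9*π*x/25) by ring, Real.sin_neg]
    ring
  have e3 : Real.sinh (9*π*|y|/25)^2 = Real.sinh (9*π*y/25)^2 := by
    rcases abs_cases y with ⟨h', _⟩ | ⟨h', _⟩ <;> rw [h']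
    rw [show 9*π*(-y)/25 = -(9*π*y/25) by ring, Real.sinh_neg]
    ring
  have e4 : Real.sinh (41*π*|y|/25)^2 = Real.sinh (41*π*y/25)^2 := by
    rcases abs_cases y with ⟨h', _⟩ | ⟨h', _⟩ <;> rw [h']
    rw [show 41*π*(-y)/25 = -(41*π*y/25) by ring, Real.sinh_neg]
    ring
  rw [e1, e2, e3, e4] at h
  exact h

lemma main_on_circle (z : ℂ) (h5 : ‖z‖ = 5/4) :
    1 < ‖Complex.sin (2 * π * z) - Complex.sin (2 * π / z)‖ := by
  have hz0 : z ≠ 0 := by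
    intro h; rw [h] at h5; simp at h5; norm_num at h5
  have hns : Complex.normSq z = 25/16 := by
    rw [← Complex.sq_norm, h5]; norm_num
  have hxy : z.re^2 + z.im^2 = 25/16 := by
    rw [← hns, Complex.normSq_apply]; ring
  have hfac : Complex.sin (2 * π * z) - Complex.sin (2 * π / z)
      = 2 * Complex.sin ((π:ℂ) * (z - z⁻¹)) * Complex.cos ((π:ℂ) * (z + z⁻¹)) := by
    rw [Complex.sin_sub_sin,
      show (2 * (π:ℂ) * z - 2 * π / z) / 2 = (π:ℂ) * (z - z⁻¹) by ring,
      show (2 * (π:ℂ) * z + 2 * π / z) / 2 = (π:ℂ) * (z + z⁻¹) by ring]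
  have h1 : (π:ℂ) * (z - z⁻¹)
      = ((9*π*z.re/25 : ℝ) : ℂ) + ((41*π*z.im/25 : ℝ) : ℂ) * Complex.I := by
    apply Complex.ext <;>
      simp [Complex.inv_re, Complex.inv_im, hns, Complex.mul_re, Complex.mul_im] <;> ring
  have h2 : (π:ℂ) * (z + z⁻¹)
      = ((41*π*z.re/25 : ℝ) : ℂ) + ((9*π*z.im/25 : ℝ) : ℂ) * Complex.I := by
    apply Complex.ext <;>
      simp [Complex.inv_re, Complex.inv_im, hns, Complex.mul_re, Complex.mul_im] <;> ring
  rw [hfac, norm_mul, norm_mul, h1, h2]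
  have hS2 := abs_sin_sq (9*π*z.re/25) (41*π*z.im/25)
  have hC2 := abs_cos_sq (41*π*z.re/25) (9*π*z.im/25)
  have hkey := key_real' z.re z.im hxy
  have hp : 0 ≤ ‖Complex.sin (((9*π*z.re/25 : ℝ) : ℂ)
      + ((41*π*z.im/25 : ℝ) : ℂ) * Complex.I)‖ := norm_nonneg _
  have hq : 0 ≤ ‖Complex.cos (((41*π*z.re/25 : ℝ) : ℂ)
      + ((9*π*z.im/25 : ℝ) : ℂ) * Complex.I)‖ := norm_nonneg _
  have habs2 : ‖(2:ℂ)‖ = 2 := by norm_num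
  rw [habs2]
  nlinarith [hS2, hC2, hkey, hp, hq, mul_nonneg hp hq]

/-- `|sin(2πz) - sin(2π/z)| > 1` on the two boundary circles
`|z| = 4/5` and `|z| = 5/4` of the annulus `A`. -/
theorem S_large_on_annulus_boundary (z : ℂ)
    (hz : ‖z‖ = 4 / 5 ∨ ‖z‖ = 5 / 4) :
    1 < ‖Complex.sin (2 * π * z) - Complex.sin (2 * π / z)‖ := by
  rcases hz with h | h
  · have hz0 : z ≠ 0 := by
      intro hh; rw [hh] at h; simp at h; norm_num at h
    have h5 : ‖z⁻¹‖ = 5/4 := by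
      rw [norm_inv, h]; norm_num
    have := main_on_circle z⁻¹ h5
    rw [show 2 * (π:ℂ) / z⁻¹ = 2 * π * z by rw [div_eq_mul_inv, inv_inv],
      show 2 * (π:ℂ) * z⁻¹ = 2 * π / z from (div_eq_mul_inv _ _).symm] at this
    rwa [show Complex.sin (2 * (π:ℂ) / z) - Complex.sin (2 * π * z)
        = -(Complex.sin (2 * π * z) - Complex.sin (2 * π / z)) by ring,
      norm_neg] at this
  · exact main_on_circle z h
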